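/- Let R be an algebra of type (𝒢, m, n) with no exotic products, and let D₁, D₂, D₃ be pairwise disjoint finite sets of positive integers such that D₁ ∪ D₃ and D₂ ∪ D₃ are subgees. Then the product V̄_{D₁} V̄_{D₂} V̄_{D₃} · (W_{D₁∪D₃}⊗1 − 1⊗W_{D₁∪D₃}) · (W_{D₂∪D₃}⊗1 − 1⊗W_{D₂∪D₃}) is nonzero in R ⊗̂ R if and only if |D₁| + |D₂| + |D₃| ≡ m (mod 2). -/

import Mathlib

open scoped TensorProduct

/-- `[k] = {1,…,k}` as a finset of positive integers. -/
def bra (k : ℕ) : Finset ℕ+ := (Finset.range k).image (fun i => ⟨i + 1, i.succ_pos⟩)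

/-- The domination order on finite multisets of positive integers: `MLE S T` holds iff there
is a submultiset `T'` of `T` that can be matched up with `S` so that each element of `S` is
at most its partner in `T'`. -/
def MLE (S T : Multiset ℕ+) : Prop := ∃ T' ≤ T, Multiset.Rel (· ≤ ·) S T'

/-- `S` is a subgee of the collection `𝒢` of gees. -/
def Subgee (𝒢 : Finset (Finset ℕ+)) (S : Finset ℕ+) : Prop := ∃ G ∈ 𝒢, MLE S.val G.val

/-- `rho i T` is the number of elements of `T` greater than `i`. -/
def rho (i : ℕ+) (T : Finset ℕ+) : ℕ := (T.filter (fun t => i < t)).card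

/-- The ordered monomial `V_S = V_{s₁} ⋯ V_{s_k}` for `S = {s₁ < ⋯ < s_k}`. -/
def VSmon {R : Type} [Ring R] (V : ℕ+ → R) (S : Finset ℕ+) : R :=
  ((S.sort (· ≤ ·)).map V).prod

/-- An algebra of type `(𝒢, m, n)`. -/
structure IsPolygonAlgebra (n m : ℕ) (𝒢 : Finset (Finset ℕ+))
    (R : Type) [Ring R] [Algebra ℚ R] [FiniteDimensional ℚ R]
    (𝒜 : ℕ → Submodule ℚ R) [GradedAlgebra 𝒜]
    (V : ℕ+ → R) (W : Finset ℕ+ → R) : Prop where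
  hn : 4 ≤ n
  hm : 1 ≤ m
  gee_nonempty : 𝒢.Nonempty
  gee_sub : ∀ G ∈ 𝒢, G ⊆ bra (n - 1)
  gee_incomp : ∀ G ∈ 𝒢, ∀ G' ∈ 𝒢, MLE G.val G'.val → G = G'
  gee_card : ∀ G ∈ 𝒢, G.card ≤ m - 1
  gcomm : ∀ (i j : ℕ) (x y : R), x ∈ 𝒜 i → y ∈ 𝒜 j →
    x * y = ((-1 : ℚ)) ^ (i * j) • (y * x)
  V_mem : ∀ i : ℕ+, (i : ℕ) ≤ n - 1 → V i ∈ 𝒜 1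
  W_mem : ∀ S : Finset ℕ+, Subgee 𝒢 S → W S ∈ 𝒜 (m - S.card)
  VS_ne : ∀ S : Finset ℕ+, S ⊆ bra (n - 1) → (VSmon V S ≠ 0 ↔ Subgee 𝒢 S)
  basis_indep : LinearIndependent ℚ
    (Sum.elim (fun S : {S : Finset ℕ+ // Subgee 𝒢 S} => VSmon V S.1)
      (fun S : {S : Finset ℕ+ // Subgee 𝒢 S} => W S.1))
  basis_span : Submodule.span ℚ (Set.range
    (Sum.elim (fun S : {S : Finset ℕ+ // Subgee 𝒢 S} => VSmon V S.1)
      (fun S : {S : Finset ℕ+ // Subgee 𝒢 S} => W S.1))) = ⊤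
  VW : ∀ S S' : Finset ℕ+, Subgee 𝒢 S → Subgee 𝒢 S' → S.card = S'.card →
    VSmon V S * W S' = if S = S' then W ∅ else 0
  WW : ∀ S S' : Finset ℕ+, Subgee 𝒢 S → Subgee 𝒢 S' → S.card + S'.card = m →
    W S * W S' = 0

/-- `R` has no exotic products. -/
def NoExoticProducts (n : ℕ) (𝒢 : Finset (Finset ℕ+))
    {R : Type} [Ring R] [Algebra ℚ R] (V : ℕ+ → R) (W : Finset ℕ+ → R) : Prop :=
  (∀ S S' : Finset ℕ+, Subgee 𝒢 S → Subgee 𝒢 S' → W S * W S' = 0) ∧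
  (∀ i : ℕ+, (i : ℕ) ≤ n - 1 → ∀ S : Finset ℕ+, Subgee 𝒢 S →
    (i ∈ S → V i * W S = ((-1 : ℚ)) ^ (rho i (S.erase i)) • W (S.erase i)) ∧
    (i ∉ S → V i * W S = 0))

section Tensor

variable {R : Type} [Ring R] [Algebra ℚ R] (𝒜 : ℕ → Submodule ℚ R) [GradedAlgebra 𝒜]

/-- The multiplication map `μ : R ⊗̂ R → R`. -/
noncomputable def muMap : (𝒜 ᵍ⊗[ℚ] 𝒜) →ₗ[ℚ] R :=
  (LinearMap.mul' ℚ R).comp (GradedTensorProduct.of ℚ 𝒜 𝒜).symm.toLinearMap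

/-- `x ⊗ y` as an element of the graded tensor product `R ⊗̂ R`. -/
noncomputable def tm (x y : R) : 𝒜 ᵍ⊗[ℚ] 𝒜 := GradedTensorProduct.of ℚ 𝒜 𝒜 (x ⊗ₜ y)

/-- `ū = u ⊗ 1 - 1 ⊗ u`. -/
noncomputable def ubar (u : R) : 𝒜 ᵍ⊗[ℚ] 𝒜 := tm 𝒜 u 1 - tm 𝒜 1 u

/-- `V̄_D = ∏_{i ∈ D} V̄ᵢ` with factors in increasing order of `i`. -/
noncomputable def Vbar (V : ℕ+ → R) (D : Finset ℕ+) : 𝒜 ᵍ⊗[ℚ] 𝒜 :=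
  ((D.sort (· ≤ ·)).map (fun i => ubar 𝒜 (V i))).prod

/-- The set of `k` such that some product of `k` zero divisors in `R ⊗̂ R` is nonzero;
`zcl R` is the greatest element of this set. -/
def zclSet : Set ℕ :=
  {k : ℕ | ∃ L : List (𝒜 ᵍ⊗[ℚ] 𝒜), L.length = k ∧
    (∀ x ∈ L, muMap 𝒜 x = 0) ∧ L.prod ≠ 0}

end Tensor

/-! ### Auxiliary combinatorial lemmas -/

section AuxPrelim

lemma mem_bra_le {k : ℕ} {t : ℕ+} (h : t ∈ bra k) : (t : ℕ) ≤ k := by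
  simp only [bra, Finset.mem_image, Finset.mem_range] at h
  obtain ⟨i, hi, rfl⟩ := Finset.mem_image.mp h
  simpa using hi

lemma rel_le_exists {S T : Multiset ℕ+} (h : Multiset.Rel (· ≤ ·) S T) {i : ℕ+} (hi : i ∈ S) :
    ∃ t ∈ T, i ≤ t := by
  induction h with
  | zero => simp at hi
  | @cons a b as bs hab h ih =>
    rcases Multiset.mem_cons.mp hi with rfl | hi
    · exact ⟨b, Multiset.mem_cons_self _ _, hab⟩
    · obtain ⟨t, ht, hle⟩ := ih hi
      exact ⟨t, Multiset.mem_cons_of_mem ht, hle⟩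

lemma MLE.mono {S' S T : Multiset ℕ+} (h : S' ≤ S) (hm : MLE S T) : MLE S' T := by
  obtain ⟨T', hT', hrel⟩ := hm
  obtain ⟨U, rfl⟩ := Multiset.le_iff_exists_add.mp h
  rw [Multiset.rel_add_left] at hrel
  obtain ⟨T₁, T₂, h1, _, rfl⟩ := hrel
  exact ⟨T₁, le_trans (Multiset.le_add_right _ _) hT', h1⟩

variable {𝒢 : Finset (Finset ℕ+)}

lemma Subgee.mono {S T : Finset ℕ+} (hsub : T ⊆ S) (h : Subgee 𝒢 S) : Subgee 𝒢 T := by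
  obtain ⟨G, hG, hm⟩ := h
  exact ⟨G, hG, hm.mono (by exact_mod_cast Finset.val_le_iff.mpr hsub)⟩

lemma Subgee.empty (h𝒢 : 𝒢.Nonempty) : Subgee 𝒢 ∅ := by
  obtain ⟨G, hG⟩ := h𝒢
  exact ⟨G, hG, 0, zero_le, Multiset.Rel.zero⟩

lemma Subgee.card_le {m : ℕ} {S : Finset ℕ+} (hcard : ∀ G ∈ 𝒢, G.card ≤ m - 1)
    (h : Subgee 𝒢 S) : S.card ≤ m - 1 := by
  obtain ⟨G, hG, T', hT', hrel⟩ := h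
  have h1 : S.card = Multiset.card T' := Multiset.card_eq_card_of_rel hrel
  have h2 : Multiset.card T' ≤ G.card := Multiset.card_le_card hT'
  exact (h1 ▸ h2).trans (hcard G hG)

lemma Subgee.mem_le {n : ℕ} (hg : ∀ G ∈ 𝒢, G ⊆ bra (n - 1)) {S : Finset ℕ+}
    (h : Subgee 𝒢 S) {i : ℕ+} (hi : i ∈ S) : (i : ℕ) ≤ n - 1 := by
  obtain ⟨G, hG, T', hT', hrel⟩ := h
  obtain ⟨t, ht, hle⟩ := rel_le_exists hrel hi
  have htG : t ∈ G := Multiset.mem_of_le hT' ht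
  exact le_trans (by exact_mod_cast hle) (mem_bra_le (hg G hG htG))

lemma rho_union {j : ℕ+} {S T : Finset ℕ+} (h : Disjoint S T) :
    rho j (S ∪ T) = rho j S + rho j T := by
  unfold rho
  rw [Finset.filter_union,
    Finset.card_union_of_disjoint (h.mono (Finset.filter_subset _ _) (Finset.filter_subset _ _))]

lemma rho_insert_of_le {j k : ℕ+} (h : j ≤ k) (X : Finset ℕ+) :
    rho k (insert j X) = rho k X := by
  unfold rho
  rw [Finset.filter_insert, if_neg (not_lt.mpr h)]

lemma rho_eq_card {j : ℕ+} {X : Finset ℕ+} (h : ∀ x ∈ X, j < x) : rho j X = X.card := by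
  unfold rho; rw [Finset.filter_true_of_mem h]

lemma sum_rho_eq (S T : Finset ℕ+) :
    ∑ j ∈ S, rho j T = ((S ×ˢ T).filter (fun p => p.1 < p.2)).card := by
  rw [Finset.card_filter, Finset.sum_product]
  refine Finset.sum_congr rfl fun j _ => ?_
  rw [rho, Finset.card_filter]

lemma rho_cross {S T : Finset ℕ+} (h : Disjoint S T) :
    (∑ j ∈ S, rho j T) + (∑ j ∈ T, rho j S) = S.card * T.card := by
  rw [sum_rho_eq, sum_rho_eq]
  have hswap : ((T ×ˢ S).filter (fun p => p.1 < p.2)).card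
      = ((S ×ˢ T).filter (fun p => p.2 < p.1)).card := by
    apply Finset.card_bij (fun p _ => (p.2, p.1))
    · rintro ⟨x, y⟩ hp
      simp only [Finset.mem_filter, Finset.mem_product] at hp ⊢
      exact ⟨⟨hp.1.2, hp.1.1⟩, hp.2⟩
    · rintro ⟨x, y⟩ _ ⟨x', y'⟩ _ hxy
      simp only [Prod.mk.injEq] at hxy ⊢
      exact ⟨hxy.2, hxy.1⟩
    · rintro ⟨x, y⟩ hp
      simp only [Finset.mem_filter, Finset.mem_product] at hp
      exact ⟨(y, x), by simp [hp.1.1, hp.1.2, hp.2], rfl⟩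
  have hfc : (S ×ˢ T).filter (fun p => ¬ p.1 < p.2) = (S ×ˢ T).filter (fun p => p.2 < p.1) := by
    apply Finset.filter_congr
    rintro ⟨x, y⟩ hp
    simp only [Finset.mem_product] at hp
    have hne : y ≠ x := fun hyx => Finset.disjoint_left.mp h hp.1 (hyx ▸ hp.2)
    simp only [not_lt, eq_iff_iff]
    exact ⟨fun hle => lt_of_le_of_ne hle hne, le_of_lt⟩
  rw [hswap, ← Finset.card_product S T,
    ← Finset.card_filter_add_card_filter_not (s := S ×ˢ T) (p := fun p => p.1 < p.2),
    hfc]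

lemma sdiff_insert_rev {S F : Finset ℕ+} {j : ℕ+} (hjS : j ∈ S) (hjF : j ∉ F) :
    S \ F = insert j (S \ insert j F) := by
  ext x
  by_cases hx : x = j
  · subst hx; simp [hjS, hjF]
  · simp [hx, Finset.mem_sdiff, Finset.mem_insert]

lemma neg_one_pow_eq_of_mod {p q : ℕ} (h : p % 2 = q % 2) : (-1 : ℚ) ^ p = (-1 : ℚ) ^ q := by
  conv_lhs => rw [← Nat.div_add_mod p 2]
  conv_rhs => rw [← Nat.div_add_mod q 2]
  rw [pow_add, pow_add, pow_mul, pow_mul, h]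
  norm_num

lemma parity_key (a b c e γ α β m x1 x2 x3 x4 x5 x6 x7 x8 x9 x10 : ℕ)
    (hc : e + γ = c) (hα : a + c + α = m) (hβ : b + c + β = m)
    (h17 : x1 + x7 = γ * a) (h29 : x2 + x9 = γ * b) (h58 : x5 + x8 = e * a)
    (h610 : x6 + x10 = e * b) (h34 : x3 + x4 = e * γ) :
    (x1 + x3 + e * (1 + α) + x4 + x6 + x4 + b * (1 + (α + γ)) + x9 + x8
      + (α * β + (x2 + x3 + e * (1 + β) + x4 + x5 + x4 + x10 + a * (1 + (a + γ + α)) + x7)))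
      % 2 = (a + b + c + m) % 2 := by
  have cast2 : ∀ u v : ℕ, ((u : ZMod 2) = (v : ZMod 2)) → u % 2 = v % 2 := fun u v h =>
    (ZMod.natCast_eq_natCast_iff' u v 2).mp h
  apply cast2
  have h2 : (2 : ZMod 2) = 0 := by decide
  have Hc := congrArg (Nat.cast : ℕ → ZMod 2) hc
  have Hα := congrArg (Nat.cast : ℕ → ZMod 2) hα
  have Hβ := congrArg (Nat.cast : ℕ → ZMod 2) hβ
  have H17 := congrArg (Nat.cast : ℕ → ZMod 2) h17
  have H29 := congrArg (Nat.cast : ℕ → ZMod 2) h29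
  have H58 := congrArg (Nat.cast : ℕ → ZMod 2) h58
  have H610 := congrArg (Nat.cast : ℕ → ZMod 2) h610
  have H34 := congrArg (Nat.cast : ℕ → ZMod 2) h34
  push_cast at Hc Hα Hβ H17 H29 H58 H610 H34 ⊢
  generalize hA : ((a : ℕ) : ZMod 2) = A at *
  generalize hB : ((b : ℕ) : ZMod 2) = B at *
  generalize hC : ((c : ℕ) : ZMod 2) = C at *
  generalize hE : ((e : ℕ) : ZMod 2) = E at *
  generalize hΓ : ((γ : ℕ) : ZMod 2) = Γ at *
  generalize hAl : ((α : ℕ) : ZMod 2) = Al at *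
  generalize hBe : ((β : ℕ) : ZMod 2) = Be at *
  generalize hM : ((m : ℕ) : ZMod 2) = M at *
  generalize hX1 : ((x1 : ℕ) : ZMod 2) = X1 at *
  generalize hX2 : ((x2 : ℕ) : ZMod 2) = X2 at *
  generalize hX3 : ((x3 : ℕ) : ZMod 2) = X3 at *
  generalize hX4 : ((x4 : ℕ) : ZMod 2) = X4 at *
  generalize hX5 : ((x5 : ℕ) : ZMod 2) = X5 at *
  generalize hX6 : ((x6 : ℕ) : ZMod 2) = X6 at *
  generalize hX7 : ((x7 : ℕ) : ZMod 2) = X7 at *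
  generalize hX8 : ((x8 : ℕ) : ZMod 2) = X8 at *
  generalize hX9 : ((x9 : ℕ) : ZMod 2) = X9 at *
  generalize hX10 : ((x10 : ℕ) : ZMod 2) = X10 at *
  have e7 : X7 = Γ * A + X1 := by linear_combination H17 - X1 * h2
  have e9 : X9 = Γ * B + X2 := by linear_combination H29 - X2 * h2
  have e8 : X8 = E * A + X5 := by linear_combination H58 - X5 * h2
  have e10 : X10 = E * B + X6 := by linear_combination H610 - X6 * h2
  have e4 : X4 = E * Γ + X3 := by linear_combination H34 - X3 * h2
  have eC : C = E + Γ := Hc.symm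
  have eM : M = A + C + Al := Hα.symm
  have eBe : Be = A + Al + B := by linear_combination Hβ - Hα - B * h2
  subst e7 e9 e8 e10 e4 eC eM eBe
  clear hA hB hC hE hΓ hAl hBe hM hX1 hX2 hX3 hX4 hX5 hX6 hX7 hX8 hX9 hX10 cast2 h2
  clear Hc Hα Hβ H17 H29 H58 H610 H34
  revert A B E Γ Al X1 X2 X3 X5 X6
  decide

lemma sd_union_right {X Y E : Finset ℕ+} (hXY : Disjoint X Y) (hE : E ⊆ Y) :
    (X ∪ Y) \ (Y \ E) = X ∪ E := by
  ext x
  simp only [Finset.mem_sdiff, Finset.mem_union]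
  have h1 : x ∈ X → x ∈ Y → False := fun hx hy => Finset.disjoint_left.mp hXY hx hy
  have h2 : x ∈ E → x ∈ Y := fun hx => hE hx
  tauto

lemma sd_union_left {X Y E : Finset ℕ+} (hXY : Disjoint X Y) (hE : E ⊆ Y) :
    (X ∪ Y) \ E = X ∪ (Y \ E) := by
  ext x
  simp only [Finset.mem_sdiff, Finset.mem_union]
  have h1 : x ∈ X → x ∈ Y → False := fun hx hy => Finset.disjoint_left.mp hXY hx hy
  have h2 : x ∈ E → x ∈ Y := fun hx => hE hx
  tauto

lemma sd_cancel {X Z : Finset ℕ+} (h : Disjoint X Z) : (X ∪ Z) \ X = Z := by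
  ext x
  simp only [Finset.mem_sdiff, Finset.mem_union]
  have h1 : x ∈ X → x ∈ Z → False := fun hx hy => Finset.disjoint_left.mp h hx hy
  tauto

end AuxPrelim

/-! ### Algebra lemmas in the graded tensor square -/

section AuxAlg

variable {R : Type} [Ring R] [Algebra ℚ R]
variable (𝒜 : ℕ → Submodule ℚ R) [GradedAlgebra 𝒜]

lemma tm_smul_left (c : ℚ) (x y : R) : tm 𝒜 (c • x) y = c • tm 𝒜 x y := by
  unfold tm; rw [← TensorProduct.smul_tmul', map_smul]

lemma tm_smul_right (c : ℚ) (x y : R) : tm 𝒜 x (c • y) = c • tm 𝒜 x y := by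
  unfold tm; rw [TensorProduct.tmul_smul, map_smul]

lemma tm_zero_left (y : R) : tm 𝒜 0 y = 0 := by
  unfold tm; rw [TensorProduct.zero_tmul, map_zero]

lemma tm_zero_right (x : R) : tm 𝒜 x 0 = 0 := by
  unfold tm; rw [TensorProduct.tmul_zero, map_zero]

lemma uzsmul (k : ℕ) (z : 𝒜 ᵍ⊗[ℚ] 𝒜) : ((-1 : ℤˣ) ^ k) • z = ((-1 : ℚ)) ^ k • z := by
  rcases Nat.even_or_odd k with hk | hk
  · rw [hk.neg_one_pow, hk.neg_one_pow, one_smul, one_smul]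
  · rw [hk.neg_one_pow, hk.neg_one_pow, Units.smul_def, Units.val_neg, Units.val_one,
      neg_one_zsmul, neg_one_smul]

lemma tm_mul_tm {p q : ℕ} (a d : R) {b c : R} (hb : b ∈ 𝒜 p) (hc : c ∈ 𝒜 q) :
    tm 𝒜 a b * tm 𝒜 c d = ((-1 : ℚ)) ^ (p * q) • tm 𝒜 (a * c) (b * d) := by
  have h := GradedTensorProduct.tmul_coe_mul_coe_tmul 𝒜 𝒜 a (⟨b, hb⟩ : 𝒜 p) (⟨c, hc⟩ : 𝒜 q) d
  rw [uzsmul] at h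
  exact h

lemma ubar_mul_tm {p q : ℕ} {u x : R} (hu : u ∈ 𝒜 p) (hx : x ∈ 𝒜 q) (y : R) :
    ubar 𝒜 u * tm 𝒜 x y
      = tm 𝒜 (u * x) y - ((-1 : ℚ)) ^ (p * q) • tm 𝒜 x (u * y) := by
  show (tm 𝒜 u 1 - tm 𝒜 1 u) * tm 𝒜 x y = _
  rw [sub_mul, tm_mul_tm 𝒜 u y (SetLike.one_mem_graded 𝒜) hx,
    tm_mul_tm 𝒜 1 y hu hx]
  simp only [zero_mul, pow_zero, one_smul, one_mul, mul_one]

end AuxAlg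

section AuxPoly
set_option linter.unusedSectionVars false

variable {n m : ℕ} {𝒢 : Finset (Finset ℕ+)}
variable {R : Type} [Ring R] [Algebra ℚ R] [FiniteDimensional ℚ R]
variable (𝒜 : ℕ → Submodule ℚ R) [GradedAlgebra 𝒜]
variable {V : ℕ+ → R} {W : Finset ℕ+ → R}

lemma step_left (hpa : IsPolygonAlgebra n m 𝒢 R 𝒜 V W) (hne : NoExoticProducts n 𝒢 V W)
    {j : ℕ+} {S S' : Finset ℕ+} (hS : Subgee 𝒢 S) (hS' : Subgee 𝒢 S')
    (hjS : j ∈ S) (hjS' : j ∉ S') :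
    ubar 𝒜 (V j) * tm 𝒜 (W S) (W S')
      = ((-1 : ℚ)) ^ (rho j (S.erase j)) • tm 𝒜 (W (S.erase j)) (W S') := by
  have hj : (j : ℕ) ≤ n - 1 := Subgee.mem_le hpa.gee_sub hS hjS
  rw [ubar_mul_tm 𝒜 (hpa.V_mem j hj) (hpa.W_mem S hS) (W S'),
    (hne.2 j hj S' hS').2 hjS', ((hne.2 j hj S hS).1 hjS), tm_zero_right, smul_zero, sub_zero,
    tm_smul_left]

lemma step_right (hpa : IsPolygonAlgebra n m 𝒢 R 𝒜 V W) (hne : NoExoticProducts n 𝒢 V W)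
    {j : ℕ+} {S S' : Finset ℕ+} (hS : Subgee 𝒢 S) (hS' : Subgee 𝒢 S')
    (hjS : j ∉ S) (hjS' : j ∈ S') :
    ubar 𝒜 (V j) * tm 𝒜 (W S) (W S')
      = ((-1 : ℚ)) ^ (1 + (m - S.card) + rho j (S'.erase j)) • tm 𝒜 (W S) (W (S'.erase j)) := by
  have hj : (j : ℕ) ≤ n - 1 := Subgee.mem_le hpa.gee_sub hS' hjS'
  rw [ubar_mul_tm 𝒜 (hpa.V_mem j hj) (hpa.W_mem S hS) (W S'),
    (hne.2 j hj S hS).2 hjS, ((hne.2 j hj S' hS').1 hjS'), tm_zero_left, zero_sub,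
    tm_smul_right, smul_smul, ← neg_smul]
  congr 1
  rw [pow_add, pow_add, pow_one, one_mul]
  ring

lemma step_both (hpa : IsPolygonAlgebra n m 𝒢 R 𝒜 V W) (hne : NoExoticProducts n 𝒢 V W)
    {j : ℕ+} {S S' : Finset ℕ+} (hS : Subgee 𝒢 S) (hS' : Subgee 𝒢 S')
    (hjS : j ∈ S) (hjS' : j ∈ S') :
    ubar 𝒜 (V j) * tm 𝒜 (W S) (W S')
      = ((-1 : ℚ)) ^ (rho j (S.erase j)) • tm 𝒜 (W (S.erase j)) (W S')
        + ((-1 : ℚ)) ^ (1 + (m - S.card) + rho j (S'.erase j)) • tm 𝒜 (W S) (W (S'.erase j)) := by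
  have hj : (j : ℕ) ≤ n - 1 := Subgee.mem_le hpa.gee_sub hS hjS
  rw [ubar_mul_tm 𝒜 (hpa.V_mem j hj) (hpa.W_mem S hS) (W S'),
    ((hne.2 j hj S hS).1 hjS), ((hne.2 j hj S' hS').1 hjS'), tm_smul_left, tm_smul_right,
    smul_smul, sub_eq_add_neg, ← neg_smul]
  congr 2
  rw [pow_add, pow_add, pow_one, one_mul]
  ring

/-- The product of the `ubar (V i)` over a list of indices. -/
noncomputable def UB (V : ℕ+ → R) (L : List ℕ+) : 𝒜 ᵍ⊗[ℚ] 𝒜 :=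
  (L.map (fun i => ubar 𝒜 (V i))).prod

lemma Vbar_eq_UB (D : Finset ℕ+) : Vbar 𝒜 V D = UB 𝒜 V (D.sort (· ≤ ·)) := rfl

lemma C1 (hpa : IsPolygonAlgebra n m 𝒢 R 𝒜 V W) (hne : NoExoticProducts n 𝒢 V W) :
    ∀ (L : List ℕ+), L.Pairwise (· < ·) → ∀ (S S' : Finset ℕ+),
    Subgee 𝒢 S → Subgee 𝒢 S' → L.toFinset ⊆ S → (∀ j ∈ L, j ∉ S') →
    UB 𝒜 V L * tm 𝒜 (W S) (W S')
      = ((-1 : ℚ)) ^ (∑ j ∈ L.toFinset, rho j (S \ L.toFinset)) •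
          tm 𝒜 (W (S \ L.toFinset)) (W S')
  | [] => by
    intro _ S S' _ _ _ _
    simp [UB]
  | j :: L' => by
    intro hsort S S' hS hS' hsub hdisj
    have hd : ∀ b ∈ L', j < b := fun _ hb => List.rel_of_pairwise_cons hsort hb
    have hsort' : L'.Pairwise (· < ·) := hsort.of_cons
    have hjL' : j ∉ L'.toFinset := fun hmem => lt_irrefl j (hd j (List.mem_toFinset.mp hmem))
    have hLins : (j :: L').toFinset = insert j L'.toFinset := List.toFinset_cons
    have hjS : j ∈ S := hsub (by rw [hLins]; exact Finset.mem_insert_self _ _)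
    have hL'S : L'.toFinset ⊆ S := fun x hx => hsub (by rw [hLins]; exact Finset.mem_insert_of_mem hx)
    have hUB : UB 𝒜 V (j :: L') = ubar 𝒜 (V j) * UB 𝒜 V L' := by
      unfold UB; rw [List.map_cons, List.prod_cons]
    rw [hUB, mul_assoc,
      C1 hpa hne L' hsort' S S' hS hS' hL'S (fun k hk => hdisj k (List.mem_cons_of_mem _ hk)),
      mul_smul_comm,
      step_left 𝒜 hpa hne (Subgee.mono Finset.sdiff_subset hS) hS'
        (Finset.mem_sdiff.mpr ⟨hjS, hjL'⟩) (hdisj j List.mem_cons_self),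
      smul_smul, ← pow_add, hLins]
    have hset : (S \ L'.toFinset).erase j = S \ insert j L'.toFinset :=
      (Finset.sdiff_insert S L'.toFinset j).symm
    rw [hset]
    congr 2
    rw [Finset.sum_insert hjL']
    have hcong : ∀ k ∈ L'.toFinset, rho k (S \ L'.toFinset) = rho k (S \ insert j L'.toFinset) := by
      intro k hk
      have hins : S \ L'.toFinset = insert j (S \ insert j L'.toFinset) :=
        sdiff_insert_rev hjS hjL'
      rw [hins, rho_insert_of_le (le_of_lt (hd k (List.mem_toFinset.mp hk)))]
    rw [Finset.sum_congr rfl hcong]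
    omega

lemma C2 (hpa : IsPolygonAlgebra n m 𝒢 R 𝒜 V W) (hne : NoExoticProducts n 𝒢 V W) :
    ∀ (L : List ℕ+), L.Pairwise (· < ·) → ∀ (S S' : Finset ℕ+),
    Subgee 𝒢 S → Subgee 𝒢 S' → L.toFinset ⊆ S' → (∀ j ∈ L, j ∉ S) →
    UB 𝒜 V L * tm 𝒜 (W S) (W S')
      = ((-1 : ℚ)) ^ (∑ j ∈ L.toFinset, (1 + (m - S.card) + rho j (S' \ L.toFinset))) •
          tm 𝒜 (W S) (W (S' \ L.toFinset))
  | [] => by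
    intro _ S S' _ _ _ _
    simp [UB]
  | j :: L' => by
    intro hsort S S' hS hS' hsub hdisj
    have hd : ∀ b ∈ L', j < b := fun _ hb => List.rel_of_pairwise_cons hsort hb
    have hsort' : L'.Pairwise (· < ·) := hsort.of_cons
    have hjL' : j ∉ L'.toFinset := fun hmem => lt_irrefl j (hd j (List.mem_toFinset.mp hmem))
    have hLins : (j :: L').toFinset = insert j L'.toFinset := List.toFinset_cons
    have hjS' : j ∈ S' := hsub (by rw [hLins]; exact Finset.mem_insert_self _ _)
    have hL'S' : L'.toFinset ⊆ S' := fun x hx => hsub (by rw [hLins]; exact Finset.mem_insert_of_mem hx)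
    have hUB : UB 𝒜 V (j :: L') = ubar 𝒜 (V j) * UB 𝒜 V L' := by
      unfold UB; rw [List.map_cons, List.prod_cons]
    rw [hUB, mul_assoc,
      C2 hpa hne L' hsort' S S' hS hS' hL'S' (fun k hk => hdisj k (List.mem_cons_of_mem _ hk)),
      mul_smul_comm,
      step_right 𝒜 hpa hne hS (Subgee.mono Finset.sdiff_subset hS')
        (hdisj j List.mem_cons_self) (Finset.mem_sdiff.mpr ⟨hjS', hjL'⟩),
      smul_smul, ← pow_add, hLins]
    have hset : (S' \ L'.toFinset).erase j = S' \ insert j L'.toFinset :=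
      (Finset.sdiff_insert S' L'.toFinset j).symm
    rw [hset]
    congr 2
    rw [Finset.sum_insert hjL']
    have hcong : ∀ k ∈ L'.toFinset, (1 + (m - S.card) + rho k (S' \ L'.toFinset))
        = (1 + (m - S.card) + rho k (S' \ insert j L'.toFinset)) := by
      intro k hk
      have hins : S' \ L'.toFinset = insert j (S' \ insert j L'.toFinset) :=
        sdiff_insert_rev hjS' hjL'
      rw [hins, rho_insert_of_le (le_of_lt (hd k (List.mem_toFinset.mp hk)))]
    rw [Finset.sum_congr rfl hcong]
    omega


/-- Sign exponent for the branching phase. -/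
def gexp (m : ℕ) (S S' K E : Finset ℕ+) : ℕ :=
  ∑ j ∈ K \ E, rho j (S \ (K \ E))
    + ∑ j ∈ E, (1 + (m - S.card) + rho j (K \ E) + rho j (S' \ E))

lemma C3 (hpa : IsPolygonAlgebra n m 𝒢 R 𝒜 V W) (hne : NoExoticProducts n 𝒢 V W) :
    ∀ (L : List ℕ+), L.Pairwise (· < ·) → ∀ (S S' : Finset ℕ+),
    Subgee 𝒢 S → Subgee 𝒢 S' → L.toFinset ⊆ S → L.toFinset ⊆ S' →
    UB 𝒜 V L * tm 𝒜 (W S) (W S')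
      = ∑ E ∈ L.toFinset.powerset,
          ((-1 : ℚ)) ^ (gexp m S S' L.toFinset E) •
            tm 𝒜 (W (S \ (L.toFinset \ E))) (W (S' \ E))
  | [] => by
    intro _ S S' _ _ _ _
    simp [UB, gexp]
  | j :: L' => by
    intro hsort S S' hS hS' hsubS hsubS'
    have hd : ∀ b ∈ L', j < b := fun _ hb => List.rel_of_pairwise_cons hsort hb
    have hsort' : L'.Pairwise (· < ·) := hsort.of_cons
    have hjK' : j ∉ L'.toFinset := fun hmem => lt_irrefl j (hd j (List.mem_toFinset.mp hmem))
    have hLins : (j :: L').toFinset = insert j L'.toFinset := List.toFinset_cons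
    have hjS : j ∈ S := hsubS (by rw [hLins]; exact Finset.mem_insert_self _ _)
    have hjS' : j ∈ S' := hsubS' (by rw [hLins]; exact Finset.mem_insert_self _ _)
    have hK'S : L'.toFinset ⊆ S := fun x hx => hsubS (by rw [hLins]; exact Finset.mem_insert_of_mem hx)
    have hK'S' : L'.toFinset ⊆ S' := fun x hx => hsubS' (by rw [hLins]; exact Finset.mem_insert_of_mem hx)
    have hUB : UB 𝒜 V (j :: L') = ubar 𝒜 (V j) * UB 𝒜 V L' := by
      unfold UB; rw [List.map_cons, List.prod_cons]
    have hScard : S.card ≤ m - 1 := Subgee.card_le hpa.gee_card hS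
    have hm : 1 ≤ m := hpa.hm
    set K' := L'.toFinset with hK'def
    have hterm : ∀ F ∈ K'.powerset,
        ubar 𝒜 (V j) * (((-1 : ℚ)) ^ (gexp m S S' K' F) •
            tm 𝒜 (W (S \ (K' \ F))) (W (S' \ F)))
        = ((-1 : ℚ)) ^ (gexp m S S' (insert j K') F) •
              tm 𝒜 (W (S \ (insert j K' \ F))) (W (S' \ F))
          + ((-1 : ℚ)) ^ (gexp m S S' (insert j K') (insert j F)) •
              tm 𝒜 (W (S \ (insert j K' \ insert j F))) (W (S' \ insert j F)) := by
      intro F hF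
      have hFK' : F ⊆ K' := Finset.mem_powerset.mp hF
      have hjF : j ∉ F := fun hmem => hjK' (hFK' hmem)
      have hjKF : j ∉ K' \ F := fun hmem => hjK' (Finset.mem_sdiff.mp hmem).1
      have hgtKF : ∀ k ∈ K' \ F, j < k := fun k hk =>
        hd k (List.mem_toFinset.mp (Finset.mem_sdiff.mp hk).1)
      have hgtF : ∀ k ∈ F, j < k := fun k hk => hd k (List.mem_toFinset.mp (hFK' hk))
      have hKF1 : insert j K' \ F = insert j (K' \ F) :=
        Finset.insert_sdiff_of_notMem _ hjF
      have hKF2 : insert j K' \ insert j F = K' \ F := by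
        ext x
        by_cases hx : x = j
        · subst hx; simp [hjK']
        · simp [hx, Finset.mem_sdiff, Finset.mem_insert]
      have hKFS : K' \ F ⊆ S := fun x hx => hK'S (Finset.mem_sdiff.mp hx).1
      have hT : Subgee 𝒢 (S \ (K' \ F)) := Subgee.mono Finset.sdiff_subset hS
      have hT' : Subgee 𝒢 (S' \ F) := Subgee.mono Finset.sdiff_subset hS'
      have hjT : j ∈ S \ (K' \ F) := Finset.mem_sdiff.mpr ⟨hjS, hjKF⟩
      have hjT' : j ∈ S' \ F := Finset.mem_sdiff.mpr ⟨hjS', hjF⟩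
      rw [mul_smul_comm, step_both 𝒜 hpa hne hT hT' hjT hjT', smul_add, smul_smul, smul_smul,
        ← pow_add, ← pow_add]
      have hsetL : (S \ (K' \ F)).erase j = S \ (insert j K' \ F) := by
        rw [hKF1, Finset.sdiff_insert]
      have hsetR : (S' \ F).erase j = S' \ insert j F := by
        rw [Finset.sdiff_insert]
      have hrevS : S \ (K' \ F) = insert j (S \ insert j (K' \ F)) :=
        sdiff_insert_rev hjS hjKF
      have hrevS' : S' \ F = insert j (S' \ insert j F) :=
        sdiff_insert_rev hjS' hjF
      have hexp1 : gexp m S S' K' F + rho j ((S \ (K' \ F)).erase j)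
          = gexp m S S' (insert j K') F := by
        unfold gexp
        rw [hKF1, Finset.sum_insert hjKF]
        have hc1 : ∀ k ∈ K' \ F, rho k (S \ (K' \ F)) = rho k (S \ insert j (K' \ F)) := by
          intro k hk
          rw [hrevS, rho_insert_of_le (le_of_lt (hgtKF k hk))]
        have hc2 : ∀ k ∈ F, rho k (insert j (K' \ F)) = rho k (K' \ F) := by
          intro k hk
          rw [rho_insert_of_le (le_of_lt (hgtF k hk))]
        rw [Finset.sum_congr rfl hc1]
        have hc2' : (∑ k ∈ F, (1 + (m - S.card) + rho k (insert j (K' \ F)) + rho k (S' \ F)))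
            = ∑ k ∈ F, (1 + (m - S.card) + rho k (K' \ F) + rho k (S' \ F)) :=
          Finset.sum_congr rfl (fun k hk => by rw [hc2 k hk])
        rw [hc2']
        have hsame : rho j ((S \ (K' \ F)).erase j) = rho j (S \ insert j (K' \ F)) := by
          rw [hsetL, hKF1]
        rw [hsame]
        omega
      have hexp2 : gexp m S S' K' F + (1 + (m - (S \ (K' \ F)).card) + rho j ((S' \ F).erase j))
          = gexp m S S' (insert j K') (insert j F) := by
        unfold gexp
        rw [hKF2, Finset.sum_insert hjF]
        have hc3 : ∀ k ∈ F, rho k (S' \ insert j F) = rho k (S' \ F) := by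
          intro k hk
          rw [hrevS', rho_insert_of_le (le_of_lt (hgtF k hk))]
        have hc3' : (∑ k ∈ F, (1 + (m - S.card) + rho k (K' \ F) + rho k (S' \ insert j F)))
            = ∑ k ∈ F, (1 + (m - S.card) + rho k (K' \ F) + rho k (S' \ F)) :=
          Finset.sum_congr rfl (fun k hk => by rw [hc3 k hk])
        rw [hc3']
        have hcard1 : (S \ (K' \ F)).card = S.card - (K' \ F).card := Finset.card_sdiff_of_subset hKFS
        have hcard2 : (K' \ F).card ≤ S.card := Finset.card_le_card hKFS
        have hrhoj : rho j (K' \ F) = (K' \ F).card := rho_eq_card hgtKF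
        have hrhoj' : rho j ((S' \ F).erase j) = rho j (S' \ insert j F) := by rw [hsetR]
        rw [hrhoj, hrhoj']
        omega
      rw [hexp1, hexp2, hsetL, hsetR, hKF2]
    rw [hUB, mul_assoc, C3 hpa hne L' hsort' S S' hS hS' hK'S hK'S', Finset.mul_sum, hLins,
      Finset.sum_powerset_insert hjK', Finset.sum_congr rfl hterm, Finset.sum_add_distrib]

end AuxPoly


/-- In an algebra of type `(𝒢, m, n)` with no exotic products, for pairwise disjoint sets
`D₁, D₂, D₃` with `D₁ ∪ D₃` and `D₂ ∪ D₃` subgees, the product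
`V̄_{D₁} V̄_{D₂} V̄_{D₃} · W̄_{D₁∪D₃} · W̄_{D₂∪D₃}` is nonzero iff
`|D₁| + |D₂| + |D₃| ≡ m (mod 2)`. -/
theorem stmt_11 (n m : ℕ) (𝒢 : Finset (Finset ℕ+))
    (R : Type) [Ring R] [Algebra ℚ R] [FiniteDimensional ℚ R]
    (𝒜 : ℕ → Submodule ℚ R) [GradedAlgebra 𝒜] (V : ℕ+ → R) (W : Finset ℕ+ → R)
    (h : IsPolygonAlgebra n m 𝒢 R 𝒜 V W)
    (hne : NoExoticProducts n 𝒢 V W)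
    (D₁ D₂ D₃ : Finset ℕ+)
    (h12 : Disjoint D₁ D₂) (h13 : Disjoint D₁ D₃) (h23 : Disjoint D₂ D₃)
    (h1 : Subgee 𝒢 (D₁ ∪ D₃)) (h2 : Subgee 𝒢 (D₂ ∪ D₃)) :
    Vbar 𝒜 V D₁ * Vbar 𝒜 V D₂ * Vbar 𝒜 V D₃ *
      ubar 𝒜 (W (D₁ ∪ D₃)) * ubar 𝒜 (W (D₂ ∪ D₃)) ≠ 0 ↔
    (D₁.card + D₂.card + D₃.card) % 2 = m % 2 := by
  classical
  have hm : 1 ≤ m := h.hm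
  have hts1 : (D₁.sort (· ≤ ·)).toFinset = D₁ := Finset.sort_toFinset _ _
  have hts2 : (D₂.sort (· ≤ ·)).toFinset = D₂ := Finset.sort_toFinset _ _
  have hts3 : (D₃.sort (· ≤ ·)).toFinset = D₃ := Finset.sort_toFinset _ _
  have hWA : W (D₁ ∪ D₃) ∈ 𝒜 (m - (D₁ ∪ D₃).card) := h.W_mem _ h1
  have hWB : W (D₂ ∪ D₃) ∈ 𝒜 (m - (D₂ ∪ D₃).card) := h.W_mem _ h2
  -- the product of the two W-bars
  have hP : ubar 𝒜 (W (D₁ ∪ D₃)) * ubar 𝒜 (W (D₂ ∪ D₃))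
      = - tm 𝒜 (W (D₁ ∪ D₃)) (W (D₂ ∪ D₃)) - (-1 : ℚ) ^ ((m - (D₁ ∪ D₃).card) * (m - (D₂ ∪ D₃).card)) • tm 𝒜 (W (D₂ ∪ D₃)) (W (D₁ ∪ D₃)) := by
    show (tm 𝒜 (W (D₁ ∪ D₃)) 1 - tm 𝒜 1 (W (D₁ ∪ D₃))) * (tm 𝒜 (W (D₂ ∪ D₃)) 1 - tm 𝒜 1 (W (D₂ ∪ D₃))) = _
    rw [sub_mul, mul_sub, mul_sub,
      tm_mul_tm 𝒜 (W (D₁ ∪ D₃)) 1 (SetLike.one_mem_graded 𝒜) hWB,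
      tm_mul_tm 𝒜 (W (D₁ ∪ D₃)) (W (D₂ ∪ D₃)) (SetLike.one_mem_graded 𝒜) (SetLike.one_mem_graded 𝒜),
      tm_mul_tm 𝒜 1 1 hWA hWB,
      tm_mul_tm 𝒜 1 (W (D₂ ∪ D₃)) hWA (SetLike.one_mem_graded 𝒜),
      hne.1 _ _ h1 h2]
    simp only [zero_mul, mul_zero, pow_zero, one_smul, one_mul, mul_one,
      tm_zero_left, tm_zero_right, smul_zero, zero_sub, sub_zero]
  -- stage 3 for Y
  have st3 : UB 𝒜 V (D₃.sort (· ≤ ·)) * tm 𝒜 (W (D₁ ∪ D₃)) (W (D₂ ∪ D₃))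
      = ∑ E ∈ D₃.powerset, (-1 : ℚ) ^ (gexp m (D₁ ∪ D₃) (D₂ ∪ D₃) D₃ E) •
          tm 𝒜 (W (D₁ ∪ E)) (W (D₂ ∪ (D₃ \ E))) := by
    rw [C3 𝒜 h hne _ (Finset.sortedLT_sort D₃).pairwise _ _ h1 h2
      (by rw [hts3]; exact Finset.subset_union_right)
      (by rw [hts3]; exact Finset.subset_union_right), hts3]
    refine Finset.sum_congr rfl fun E hE => ?_
    rw [sd_union_right h13 (Finset.mem_powerset.mp hE),
      sd_union_left h23 (Finset.mem_powerset.mp hE)]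
  -- stage 2 for Y
  have st2 : UB 𝒜 V (D₂.sort (· ≤ ·)) * (∑ E ∈ D₃.powerset, (-1 : ℚ) ^ (gexp m (D₁ ∪ D₃) (D₂ ∪ D₃) D₃ E) •
          tm 𝒜 (W (D₁ ∪ E)) (W (D₂ ∪ (D₃ \ E))))
      = ∑ E ∈ D₃.powerset, (-1 : ℚ) ^ (gexp m (D₁ ∪ D₃) (D₂ ∪ D₃) D₃ E + (∑ j ∈ D₂, (1 + (m - (D₁ ∪ E).card) + rho j (D₃ \ E)))) •
          tm 𝒜 (W (D₁ ∪ E)) (W (D₃ \ E)) := by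
    rw [Finset.mul_sum]
    refine Finset.sum_congr rfl fun E hE => ?_
    have hE' : E ⊆ D₃ := Finset.mem_powerset.mp hE
    have hD2E : Disjoint D₂ E := Finset.disjoint_of_subset_right hE' h23
    have hD2C : Disjoint D₂ (D₃ \ E) := Finset.disjoint_of_subset_right Finset.sdiff_subset h23
    have hSubL : Subgee 𝒢 (D₁ ∪ E) :=
      Subgee.mono (Finset.union_subset_union_right hE') h1
    have hSubR : Subgee 𝒢 (D₂ ∪ (D₃ \ E)) :=
      Subgee.mono (Finset.union_subset_union_right Finset.sdiff_subset) h2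
    have hdj : ∀ j ∈ D₂.sort (· ≤ ·), j ∉ D₁ ∪ E := by
      intro j hj hmem
      have hj2 : j ∈ D₂ := (Finset.mem_sort _).mp hj
      rcases Finset.mem_union.mp hmem with h' | h'
      · exact Finset.disjoint_left.mp h12 h' hj2
      · exact Finset.disjoint_left.mp hD2E hj2 h'
    rw [mul_smul_comm, C2 𝒜 h hne _ (Finset.sortedLT_sort D₂).pairwise _ _ hSubL hSubR
      (by rw [hts2]; exact Finset.subset_union_left) hdj, hts2, sd_cancel hD2C,
      smul_smul, ← pow_add]
  -- stage 1 for Y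
  have st1 : UB 𝒜 V (D₁.sort (· ≤ ·)) * (∑ E ∈ D₃.powerset,
        (-1 : ℚ) ^ (gexp m (D₁ ∪ D₃) (D₂ ∪ D₃) D₃ E + (∑ j ∈ D₂, (1 + (m - (D₁ ∪ E).card) + rho j (D₃ \ E)))) • tm 𝒜 (W (D₁ ∪ E)) (W (D₃ \ E)))
      = ∑ E ∈ D₃.powerset, (-1 : ℚ) ^ (gexp m (D₁ ∪ D₃) (D₂ ∪ D₃) D₃ E + (∑ j ∈ D₂, (1 + (m - (D₁ ∪ E).card) + rho j (D₃ \ E))) + (∑ j ∈ D₁, rho j E)) • tm 𝒜 (W E) (W (D₃ \ E)) := by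
    rw [Finset.mul_sum]
    refine Finset.sum_congr rfl fun E hE => ?_
    have hE' : E ⊆ D₃ := Finset.mem_powerset.mp hE
    have hD1E : Disjoint D₁ E := Finset.disjoint_of_subset_right hE' h13
    have hSubL : Subgee 𝒢 (D₁ ∪ E) :=
      Subgee.mono (Finset.union_subset_union_right hE') h1
    have hSubR : Subgee 𝒢 (D₃ \ E) :=
      Subgee.mono (Finset.Subset.trans Finset.sdiff_subset Finset.subset_union_right) h2
    have hdj : ∀ j ∈ D₁.sort (· ≤ ·), j ∉ D₃ \ E := by
      intro j hj hmem
      have hj1 : j ∈ D₁ := (Finset.mem_sort _).mp hj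
      exact Finset.disjoint_left.mp h13 hj1 (Finset.mem_sdiff.mp hmem).1
    rw [mul_smul_comm, C1 𝒜 h hne _ (Finset.sortedLT_sort D₁).pairwise _ _ hSubL hSubR
      (by rw [hts1]; exact Finset.subset_union_left) hdj, hts1, sd_cancel hD1E,
      smul_smul, ← pow_add]
  -- stage 3 for Z
  have st3z : UB 𝒜 V (D₃.sort (· ≤ ·)) * tm 𝒜 (W (D₂ ∪ D₃)) (W (D₁ ∪ D₃))
      = ∑ E ∈ D₃.powerset, (-1 : ℚ) ^ (gexp m (D₂ ∪ D₃) (D₁ ∪ D₃) D₃ E) •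
          tm 𝒜 (W (D₂ ∪ E)) (W (D₁ ∪ (D₃ \ E))) := by
    rw [C3 𝒜 h hne _ (Finset.sortedLT_sort D₃).pairwise _ _ h2 h1
      (by rw [hts3]; exact Finset.subset_union_right)
      (by rw [hts3]; exact Finset.subset_union_right), hts3]
    refine Finset.sum_congr rfl fun E hE => ?_
    rw [sd_union_right h23 (Finset.mem_powerset.mp hE),
      sd_union_left h13 (Finset.mem_powerset.mp hE)]
  -- stage 2 for Z
  have st2z : UB 𝒜 V (D₂.sort (· ≤ ·)) * (∑ E ∈ D₃.powerset, (-1 : ℚ) ^ (gexp m (D₂ ∪ D₃) (D₁ ∪ D₃) D₃ E) •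
          tm 𝒜 (W (D₂ ∪ E)) (W (D₁ ∪ (D₃ \ E))))
      = ∑ E ∈ D₃.powerset, (-1 : ℚ) ^ (gexp m (D₂ ∪ D₃) (D₁ ∪ D₃) D₃ E + (∑ j ∈ D₂, rho j E)) •
          tm 𝒜 (W E) (W (D₁ ∪ (D₃ \ E))) := by
    rw [Finset.mul_sum]
    refine Finset.sum_congr rfl fun E hE => ?_
    have hE' : E ⊆ D₃ := Finset.mem_powerset.mp hE
    have hD2E : Disjoint D₂ E := Finset.disjoint_of_subset_right hE' h23
    have hD1C : Disjoint D₁ (D₃ \ E) := Finset.disjoint_of_subset_right Finset.sdiff_subset h13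
    have hSubL : Subgee 𝒢 (D₂ ∪ E) :=
      Subgee.mono (Finset.union_subset_union_right hE') h2
    have hSubR : Subgee 𝒢 (D₁ ∪ (D₃ \ E)) :=
      Subgee.mono (Finset.union_subset_union_right Finset.sdiff_subset) h1
    have hdj : ∀ j ∈ D₂.sort (· ≤ ·), j ∉ D₁ ∪ (D₃ \ E) := by
      intro j hj hmem
      have hj2 : j ∈ D₂ := (Finset.mem_sort _).mp hj
      rcases Finset.mem_union.mp hmem with h' | h'
      · exact Finset.disjoint_left.mp h12 h' hj2
      · exact Finset.disjoint_left.mp h23 hj2 (Finset.mem_sdiff.mp h').1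
    rw [mul_smul_comm, C1 𝒜 h hne _ (Finset.sortedLT_sort D₂).pairwise _ _ hSubL hSubR
      (by rw [hts2]; exact Finset.subset_union_left) hdj, hts2, sd_cancel hD2E,
      smul_smul, ← pow_add]
  -- stage 1 for Z
  have st1z : UB 𝒜 V (D₁.sort (· ≤ ·)) * (∑ E ∈ D₃.powerset,
        (-1 : ℚ) ^ (gexp m (D₂ ∪ D₃) (D₁ ∪ D₃) D₃ E + (∑ j ∈ D₂, rho j E)) • tm 𝒜 (W E) (W (D₁ ∪ (D₃ \ E))))
      = ∑ E ∈ D₃.powerset, (-1 : ℚ) ^ (gexp m (D₂ ∪ D₃) (D₁ ∪ D₃) D₃ E + (∑ j ∈ D₂, rho j E) + (∑ j ∈ D₁, (1 + (m - E.card) + rho j (D₃ \ E)))) • tm 𝒜 (W E) (W (D₃ \ E)) := by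
    rw [Finset.mul_sum]
    refine Finset.sum_congr rfl fun E hE => ?_
    have hE' : E ⊆ D₃ := Finset.mem_powerset.mp hE
    have hD1E : Disjoint D₁ E := Finset.disjoint_of_subset_right hE' h13
    have hD1C : Disjoint D₁ (D₃ \ E) := Finset.disjoint_of_subset_right Finset.sdiff_subset h13
    have hSubL : Subgee 𝒢 E :=
      Subgee.mono (Finset.Subset.trans hE' Finset.subset_union_right) h2
    have hSubR : Subgee 𝒢 (D₁ ∪ (D₃ \ E)) :=
      Subgee.mono (Finset.union_subset_union_right Finset.sdiff_subset) h1
    have hdj : ∀ j ∈ D₁.sort (· ≤ ·), j ∉ E := by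
      intro j hj hmem
      have hj1 : j ∈ D₁ := (Finset.mem_sort _).mp hj
      exact Finset.disjoint_left.mp hD1E hj1 hmem
    rw [mul_smul_comm, C2 𝒜 h hne _ (Finset.sortedLT_sort D₁).pairwise _ _ hSubL hSubR
      (by rw [hts1]; exact Finset.subset_union_left) hdj, hts1, sd_cancel hD1C,
      smul_smul, ← pow_add]
  -- the full product
  have hbig : Vbar 𝒜 V D₁ * Vbar 𝒜 V D₂ * Vbar 𝒜 V D₃ *
        ubar 𝒜 (W (D₁ ∪ D₃)) * ubar 𝒜 (W (D₂ ∪ D₃))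
      = ∑ E ∈ D₃.powerset, (-(-1 : ℚ) ^ (gexp m (D₁ ∪ D₃) (D₂ ∪ D₃) D₃ E + (∑ j ∈ D₂, (1 + (m - (D₁ ∪ E).card) + rho j (D₃ \ E))) + (∑ j ∈ D₁, rho j E)) - (-1 : ℚ) ^ ((m - (D₁ ∪ D₃).card) * (m - (D₂ ∪ D₃).card)) * (-1 : ℚ) ^ (gexp m (D₂ ∪ D₃) (D₁ ∪ D₃) D₃ E + (∑ j ∈ D₂, rho j E) + (∑ j ∈ D₁, (1 + (m - E.card) + rho j (D₃ \ E))))) • tm 𝒜 (W E) (W (D₃ \ E)) := by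
    simp only [Vbar_eq_UB, mul_assoc]
    rw [hP]
    simp only [mul_sub, mul_neg, mul_smul_comm]
    rw [st3, st2, st1, st3z, st2z, st1z, Finset.smul_sum, ← Finset.sum_neg_distrib,
      ← Finset.sum_sub_distrib]
    refine Finset.sum_congr rfl fun E hE => ?_
    rw [smul_smul, sub_smul, neg_smul]
  -- parity of the exponents
  have hkey : ∀ E, E ⊆ D₃ →
      ((gexp m (D₁ ∪ D₃) (D₂ ∪ D₃) D₃ E + (∑ j ∈ D₂, (1 + (m - (D₁ ∪ E).card) + rho j (D₃ \ E))) + (∑ j ∈ D₁, rho j E)) + (((m - (D₁ ∪ D₃).card) * (m - (D₂ ∪ D₃).card)) + (gexp m (D₂ ∪ D₃) (D₁ ∪ D₃) D₃ E + (∑ j ∈ D₂, rho j E) + (∑ j ∈ D₁, (1 + (m - E.card) + rho j (D₃ \ E)))))) % 2 = (D₁.card + D₂.card + D₃.card + m) % 2 := by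
    intro E hE
    have hD1E : Disjoint D₁ E := Finset.disjoint_of_subset_right hE h13
    have hD2E : Disjoint D₂ E := Finset.disjoint_of_subset_right hE h23
    have hD1C : Disjoint D₁ (D₃ \ E) := Finset.disjoint_of_subset_right Finset.sdiff_subset h13
    have hD2C : Disjoint D₂ (D₃ \ E) := Finset.disjoint_of_subset_right Finset.sdiff_subset h23
    have hCD1 : Disjoint (D₃ \ E) D₁ := hD1C.symm
    have hCD2 : Disjoint (D₃ \ E) D₂ := hD2C.symm
    have hCE : Disjoint (D₃ \ E) E := Finset.sdiff_disjoint
    have hcA : (D₁ ∪ D₃).card = D₁.card + D₃.card := Finset.card_union_of_disjoint h13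
    have hcB : (D₂ ∪ D₃).card = D₂.card + D₃.card := Finset.card_union_of_disjoint h23
    have hcU : (D₁ ∪ E).card = D₁.card + E.card := Finset.card_union_of_disjoint hD1E
    have hcC : E.card + (D₃ \ E).card = D₃.card := by
      have hq := Finset.card_sdiff_of_subset hE
      have hq2 := Finset.card_le_card hE
      omega
    have hAle : D₁.card + D₃.card ≤ m - 1 := hcA ▸ Subgee.card_le h.gee_card h1
    have hBle : D₂.card + D₃.card ≤ m - 1 := hcB ▸ Subgee.card_le h.gee_card h2
    obtain ⟨α, hα⟩ : ∃ α, D₁.card + D₃.card + α = m :=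
      ⟨m - (D₁.card + D₃.card), by omega⟩
    obtain ⟨β, hβ⟩ : ∃ β, D₂.card + D₃.card + β = m :=
      ⟨m - (D₂.card + D₃.card), by omega⟩
    have hs1 : m - (D₁ ∪ D₃).card = α := by rw [hcA]; omega
    have hs2 : m - (D₂ ∪ D₃).card = β := by rw [hcB]; omega
    have hs3 : m - (D₁ ∪ E).card = α + (D₃ \ E).card := by rw [hcU]; omega
    have hs4 : m - E.card = D₁.card + ((D₃ \ E).card + α) := by omega
    have huD1E : ∀ j : ℕ+, rho j (D₁ ∪ E) = rho j D₁ + rho j E := fun j => rho_union hD1E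
    have huD2E : ∀ j : ℕ+, rho j (D₂ ∪ E) = rho j D₂ + rho j E := fun j => rho_union hD2E
    have huD1C : ∀ j : ℕ+, rho j (D₁ ∪ (D₃ \ E)) = rho j D₁ + rho j (D₃ \ E) :=
      fun j => rho_union hD1C
    have huD2C : ∀ j : ℕ+, rho j (D₂ ∪ (D₃ \ E)) = rho j D₂ + rho j (D₃ \ E) :=
      fun j => rho_union hD2C
    have hYv : (gexp m (D₁ ∪ D₃) (D₂ ∪ D₃) D₃ E + (∑ j ∈ D₂, (1 + (m - (D₁ ∪ E).card) + rho j (D₃ \ E))) + (∑ j ∈ D₁, rho j E)) = (∑ j ∈ D₃ \ E, rho j D₁) + (∑ j ∈ D₃ \ E, rho j E) + E.card * (1 + α) + (∑ j ∈ E, rho j (D₃ \ E)) + (∑ j ∈ E, rho j D₂) + (∑ j ∈ E, rho j (D₃ \ E))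
        + D₂.card * (1 + (α + (D₃ \ E).card)) + (∑ j ∈ D₂, rho j (D₃ \ E)) + (∑ j ∈ D₁, rho j E) := by
      simp only [gexp]
      rw [sd_union_right h13 hE, sd_union_left h23 hE, hs1, hs3]
      simp only [huD1E, huD2C, Finset.sum_add_distrib, Finset.sum_const, smul_eq_mul]
      ring
    have hZv : (gexp m (D₂ ∪ D₃) (D₁ ∪ D₃) D₃ E + (∑ j ∈ D₂, rho j E) + (∑ j ∈ D₁, (1 + (m - E.card) + rho j (D₃ \ E)))) = (∑ j ∈ D₃ \ E, rho j D₂) + (∑ j ∈ D₃ \ E, rho j E) + E.card * (1 + β) + (∑ j ∈ E, rho j (D₃ \ E)) + (∑ j ∈ E, rho j D₁) + (∑ j ∈ E, rho j (D₃ \ E)) + (∑ j ∈ D₂, rho j E)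
        + D₁.card * (1 + (D₁.card + (D₃ \ E).card + α)) + (∑ j ∈ D₁, rho j (D₃ \ E)) := by
      simp only [gexp]
      rw [sd_union_right h23 hE, sd_union_left h13 hE, hs2, hs4]
      simp only [huD2E, huD1C, Finset.sum_add_distrib, Finset.sum_const, smul_eq_mul]
      ring
    have hpq' : ((m - (D₁ ∪ D₃).card) * (m - (D₂ ∪ D₃).card)) = α * β := by rw [hs1, hs2]
    rw [hYv, hZv, hpq']
    exact parity_key D₁.card D₂.card D₃.card E.card ((D₃ \ E).card) α β m
      (∑ j ∈ D₃ \ E, rho j D₁) (∑ j ∈ D₃ \ E, rho j D₂) (∑ j ∈ D₃ \ E, rho j E) (∑ j ∈ E, rho j (D₃ \ E)) (∑ j ∈ E, rho j D₁) (∑ j ∈ E, rho j D₂) (∑ j ∈ D₁, rho j (D₃ \ E)) (∑ j ∈ D₁, rho j E) (∑ j ∈ D₂, rho j (D₃ \ E)) (∑ j ∈ D₂, rho j E) hcC hα hβ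
      (rho_cross hCD1) (rho_cross hCD2) (rho_cross (hD1E.symm))
      (rho_cross (hD2E.symm)) ((rho_cross hCE).trans (Nat.mul_comm _ _))
  -- rewrite each coefficient
  have hcoef : ∀ E, E ⊆ D₃ →
      (-(-1 : ℚ) ^ (gexp m (D₁ ∪ D₃) (D₂ ∪ D₃) D₃ E + (∑ j ∈ D₂, (1 + (m - (D₁ ∪ E).card) + rho j (D₃ \ E))) + (∑ j ∈ D₁, rho j E)) - (-1 : ℚ) ^ ((m - (D₁ ∪ D₃).card) * (m - (D₂ ∪ D₃).card)) * (-1 : ℚ) ^ (gexp m (D₂ ∪ D₃) (D₁ ∪ D₃) D₃ E + (∑ j ∈ D₂, rho j E) + (∑ j ∈ D₁, (1 + (m - E.card) + rho j (D₃ \ E))))) = -(1 + (-1 : ℚ) ^ (D₁.card + D₂.card + D₃.card + m)) * (-1 : ℚ) ^ (gexp m (D₁ ∪ D₃) (D₂ ∪ D₃) D₃ E + (∑ j ∈ D₂, (1 + (m - (D₁ ∪ E).card) + rho j (D₃ \ E))) + (∑ j ∈ D₁, rho j E)) := by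
    intro E hE
    have hk := hkey E hE
    have hprod : (-1 : ℚ) ^ (gexp m (D₁ ∪ D₃) (D₂ ∪ D₃) D₃ E + (∑ j ∈ D₂, (1 + (m - (D₁ ∪ E).card) + rho j (D₃ \ E))) + (∑ j ∈ D₁, rho j E)) * ((-1 : ℚ) ^ ((m - (D₁ ∪ D₃).card) * (m - (D₂ ∪ D₃).card)) * (-1 : ℚ) ^ (gexp m (D₂ ∪ D₃) (D₁ ∪ D₃) D₃ E + (∑ j ∈ D₂, rho j E) + (∑ j ∈ D₁, (1 + (m - E.card) + rho j (D₃ \ E))))) = (-1 : ℚ) ^ (D₁.card + D₂.card + D₃.card + m) := by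
      rw [← pow_add, ← pow_add]
      exact neg_one_pow_eq_of_mod hk
    have hsq : (-1 : ℚ) ^ (gexp m (D₁ ∪ D₃) (D₂ ∪ D₃) D₃ E + (∑ j ∈ D₂, (1 + (m - (D₁ ∪ E).card) + rho j (D₃ \ E))) + (∑ j ∈ D₁, rho j E)) * (-1 : ℚ) ^ (gexp m (D₁ ∪ D₃) (D₂ ∪ D₃) D₃ E + (∑ j ∈ D₂, (1 + (m - (D₁ ∪ E).card) + rho j (D₃ \ E))) + (∑ j ∈ D₁, rho j E)) = 1 := by
      rw [← pow_add, neg_one_pow_eq_of_mod (show ((gexp m (D₁ ∪ D₃) (D₂ ∪ D₃) D₃ E + (∑ j ∈ D₂, (1 + (m - (D₁ ∪ E).card) + rho j (D₃ \ E))) + (∑ j ∈ D₁, rho j E)) + (gexp m (D₁ ∪ D₃) (D₂ ∪ D₃) D₃ E + (∑ j ∈ D₂, (1 + (m - (D₁ ∪ E).card) + rho j (D₃ \ E))) + (∑ j ∈ D₁, rho j E))) % 2 = 0 % 2 by omega), pow_zero]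
    linear_combination (-((-1 : ℚ) ^ (gexp m (D₁ ∪ D₃) (D₂ ∪ D₃) D₃ E + (∑ j ∈ D₂, (1 + (m - (D₁ ∪ E).card) + rho j (D₃ \ E))) + (∑ j ∈ D₁, rho j E)))) * hprod + ((-1 : ℚ) ^ ((m - (D₁ ∪ D₃).card) * (m - (D₂ ∪ D₃).card)) * (-1 : ℚ) ^ (gexp m (D₂ ∪ D₃) (D₁ ∪ D₃) D₃ E + (∑ j ∈ D₂, rho j E) + (∑ j ∈ D₁, (1 + (m - E.card) + rho j (D₃ \ E))))) * hsq
  -- subgee facts for basis work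
  have hOsub : Subgee 𝒢 (∅ : Finset ℕ+) := Subgee.empty h.gee_nonempty
  have hDsub : Subgee 𝒢 (D₃ \ (∅ : Finset ℕ+)) :=
    Subgee.mono (Finset.Subset.trans Finset.sdiff_subset Finset.subset_union_right) h2
  have hbG : ∀ (S S' : Finset ℕ+) (hS : Subgee 𝒢 S) (hS' : Subgee 𝒢 S'),
      tm 𝒜 (W S) (W S') = (((Module.Basis.mk h.basis_indep (le_of_eq h.basis_span.symm)).tensorProduct (Module.Basis.mk h.basis_indep (le_of_eq h.basis_span.symm))).map (GradedTensorProduct.of ℚ 𝒜 𝒜)) (Sum.inr ⟨S, hS⟩, Sum.inr ⟨S', hS'⟩) := by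
    intro S S' hS hS'
    rw [Module.Basis.map_apply, Module.Basis.tensorProduct_apply, Module.Basis.mk_apply, Module.Basis.mk_apply]
    rfl
  have heval : ((((Module.Basis.mk h.basis_indep (le_of_eq h.basis_span.symm)).tensorProduct (Module.Basis.mk h.basis_indep (le_of_eq h.basis_span.symm))).map (GradedTensorProduct.of ℚ 𝒜 𝒜)).repr (∑ E ∈ D₃.powerset, (-(-1 : ℚ) ^ (gexp m (D₁ ∪ D₃) (D₂ ∪ D₃) D₃ E + (∑ j ∈ D₂, (1 + (m - (D₁ ∪ E).card) + rho j (D₃ \ E))) + (∑ j ∈ D₁, rho j E)) - (-1 : ℚ) ^ ((m - (D₁ ∪ D₃).card) * (m - (D₂ ∪ D₃).card)) * (-1 : ℚ) ^ (gexp m (D₂ ∪ D₃) (D₁ ∪ D₃) D₃ E + (∑ j ∈ D₂, rho j E) + (∑ j ∈ D₁, (1 + (m - E.card) + rho j (D₃ \ E))))) • tm 𝒜 (W E) (W (D₃ \ E))))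
      (Sum.inr ⟨∅, hOsub⟩, Sum.inr ⟨D₃ \ ∅, hDsub⟩)
      = (-(-1 : ℚ) ^ (gexp m (D₁ ∪ D₃) (D₂ ∪ D₃) D₃ (∅ : Finset ℕ+) + (∑ j ∈ D₂, (1 + (m - (D₁ ∪ (∅ : Finset ℕ+)).card) + rho j (D₃ \ (∅ : Finset ℕ+)))) + (∑ j ∈ D₁, rho j (∅ : Finset ℕ+))) - (-1 : ℚ) ^ ((m - (D₁ ∪ D₃).card) * (m - (D₂ ∪ D₃).card)) * (-1 : ℚ) ^ (gexp m (D₂ ∪ D₃) (D₁ ∪ D₃) D₃ (∅ : Finset ℕ+) + (∑ j ∈ D₂, rho j (∅ : Finset ℕ+)) + (∑ j ∈ D₁, (1 + (m - (∅ : Finset ℕ+).card) + rho j (D₃ \ (∅ : Finset ℕ+)))))) := by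
    rw [map_sum, Finsupp.finset_sum_apply]
    rw [Finset.sum_eq_single_of_mem ∅ (Finset.empty_mem_powerset D₃)]
    · rw [hbG ∅ (D₃ \ ∅) hOsub hDsub, map_smul, Module.Basis.repr_self, Finsupp.smul_apply,
        Finsupp.single_apply, if_pos rfl, smul_eq_mul, mul_one]
    · intro E hE hEne
      have hEs : Subgee 𝒢 E :=
        Subgee.mono (Finset.Subset.trans (Finset.mem_powerset.mp hE) Finset.subset_union_right) h2
      have hCs : Subgee 𝒢 (D₃ \ E) :=
        Subgee.mono (Finset.Subset.trans Finset.sdiff_subset Finset.subset_union_right) h2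
      rw [hbG E (D₃ \ E) hEs hCs, map_smul, Module.Basis.repr_self, Finsupp.smul_apply,
        Finsupp.single_apply, if_neg, smul_zero]
      intro hEq
      apply hEne
      have hfst := congrArg Prod.fst hEq
      simp only [Sum.inr.injEq] at hfst
      exact congrArg Subtype.val hfst
  rw [hbig]
  constructor
  · intro hne0
    by_contra hpar
    apply hne0
    apply Finset.sum_eq_zero
    intro E hE
    rw [hcoef E (Finset.mem_powerset.mp hE)]
    have hsig : (-1 : ℚ) ^ (D₁.card + D₂.card + D₃.card + m) = -1 := by
      rw [neg_one_pow_eq_of_mod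
        (show (D₁.card + D₂.card + D₃.card + m) % 2 = 1 % 2 by omega), pow_one]
    rw [hsig, show -(1 + (-1 : ℚ)) = 0 by norm_num, zero_mul, zero_smul]
  · intro hpar h0
    have hsig : (-1 : ℚ) ^ (D₁.card + D₂.card + D₃.card + m) = 1 := by
      rw [neg_one_pow_eq_of_mod
        (show (D₁.card + D₂.card + D₃.card + m) % 2 = 0 % 2 by omega), pow_zero]
    have hc0 := hcoef ∅ (Finset.empty_subset _)
    have heval' := heval
    rw [h0, map_zero] at heval'
    simp only [Finsupp.coe_zero, Pi.zero_apply] at heval'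
    rw [hc0 , hsig] at heval'
    rcases Nat.even_or_odd (gexp m (D₁ ∪ D₃) (D₂ ∪ D₃) D₃ (∅ : Finset ℕ+) + (∑ j ∈ D₂, (1 + (m - (D₁ ∪ (∅ : Finset ℕ+)).card) + rho j (D₃ \ (∅ : Finset ℕ+)))) + (∑ j ∈ D₁, rho j (∅ : Finset ℕ+))) with hp | hp
    · rw [hp.neg_one_pow] at heval'
      norm_num at heval'
    · rw [hp.neg_one_pow] at heval'
      norm_num at heval'
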